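/- For every real t and every n ≥ 0, det((H_{i+j}(t))_{i,j=0}^{n}) = (−1)^n · t^{n²} · r(n,t) / (C(2n,n) · ∏_{j=1}^{n−1} ((2j+1)·C(2j,j)²)), where r(n,t) = ∑_{j=0}^{n} (−t)^{n−j}·C(n,j)·C(n+j,j)·H_j(t). -/

import Mathlib

/-- `H_m(t) = ∑_{k=1}^m t^k/k`. -/
noncomputable def harmonicPoly (m : ℕ) (t : ℝ) : ℝ := ∑ k ∈ Finset.Icc 1 m, t ^ k / (k : ℝ)

/-- `r(n,t) = ∑_{j=0}^n (−t)^{n−j}·C(n,j)·C(n+j,j)·H_j(t)`. -/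
noncomputable def rPoly (n : ℕ) (t : ℝ) : ℝ :=
  ∑ j ∈ Finset.range (n + 1),
    (-t) ^ (n - j) * (Nat.choose n j : ℝ) * (Nat.choose (n + j) j : ℝ) * harmonicPoly j t

section Aux
open Finset Matrix


-- telescoping factorial product
lemma prod_fact_shift (c : ℕ) : ∀ m : ℕ,
    (∏ i ∈ range m, (c + 1 + i).factorial) * c.factorial =
      (∏ i ∈ range m, (c + i).factorial) * (c + m).factorial := by
  intro m
  induction m with
  | zero => simp
  | succ m ih =>
    rw [prod_range_succ, prod_range_succ]
    have : (∏ i ∈ range m, (c + 1 + i).factorial) * (c + 1 + m).factorial * c.factorial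
        = ((∏ i ∈ range m, (c + 1 + i).factorial) * c.factorial) * (c + 1 + m).factorial := by ring
    rw [this, ih]
    have h2 : c + (m+1) = c + 1 + m := by ring
    rw [h2]

-- ∏_{j<n} (k+j+1) * k! = (n+k)!
lemma prod_shift_fact (k : ℕ) : ∀ n : ℕ,
    (∏ j ∈ range n, (k + j + 1)) * k.factorial = (n + k).factorial := by
  intro n
  induction n with
  | zero => simp
  | succ n ih =>
    rw [prod_range_succ]
    have : (∏ j ∈ range n, (k + j + 1)) * (k + n + 1) * k.factorial
        = ((∏ j ∈ range n, (k + j + 1)) * k.factorial) * (k + n + 1) := by ring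
    rw [this, ih]
    have : n + 1 + k = (n + k) + 1 := by ring
    rw [this, Nat.factorial_succ]
    ring

-- ∏_{m < k}(k-m) = k!
lemma prod_sub_fact (k : ℕ) : (∏ m ∈ range k, (k - m)) = k.factorial := by
  rw [← Finset.prod_range_reflect]
  have : ∀ m ∈ range k, k - (k - 1 - m) = m + 1 := by
    intro m hm; rw [mem_range] at hm; omega
  rw [Finset.prod_congr rfl this, prod_range_add_one_eq_factorial]

-- choose identity
lemma choose_prod_eq (n k : ℕ) (h : k ≤ n) :
    (n.choose k) * ((n+k).choose k) * (k.factorial * k.factorial * (n - k).factorial)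
      = (n + k).factorial := by
  have h1 : n.choose k * k.factorial * (n-k).factorial = n.factorial :=
    Nat.choose_mul_factorial_mul_factorial h
  have h2 : (n+k).choose k * k.factorial * ((n+k)-k).factorial = (n+k).factorial :=
    Nat.choose_mul_factorial_mul_factorial (Nat.le_add_left k n)
  have h3 : n + k - k = n := by omega
  rw [h3] at h2
  calc (n.choose k) * ((n+k).choose k) * (k.factorial * k.factorial * (n - k).factorial)
      = ((n+k).choose k * k.factorial) * (n.choose k * k.factorial * (n-k).factorial) := by ring
    _ = ((n+k).choose k * k.factorial) * n.factorial := by rw [h1]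
    _ = (n+k).factorial := by rw [← h2]

-- the main numeric identity
lemma claim_nat : ∀ n : ℕ,
    (2*n).choose n * (∏ j ∈ Icc 1 (n-1), ((2*j+1) * ((2*j).choose j)^2)) *
      (∏ r ∈ range (n+1), r.factorial) * (∏ r ∈ range n, r.factorial) *
      (∏ i ∈ range (n+1), i.factorial) = ∏ i ∈ range (n+1), (n + i).factorial := by
  intro n
  induction n with
  | zero => decide
  | succ n ih =>
    have hP : (∏ j ∈ Icc 1 n, ((2*j+1) * ((2*j).choose j)^2))
        = (∏ j ∈ Icc 1 (n-1), ((2*j+1) * ((2*j).choose j)^2)) * ((2*n+1) * ((2*n).choose n)^2) := by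
      rcases Nat.eq_zero_or_pos n with h0 | h0
      · subst h0; decide
      · have h1 : n - 1 + 1 = n := by omega
        rw [← h1, prod_Icc_succ_top (by omega), h1]
    have key1 : (2*(n+1)).choose (n+1) * (n+1).factorial * (n+1).factorial
        = (2*n+2).factorial := by
      have := Nat.choose_mul_factorial_mul_factorial (show n+1 ≤ 2*(n+1) by omega)
      have h3 : 2*(n+1) - (n+1) = n+1 := by omega
      rw [h3] at this
      have h4 : (2*n+2) = 2*(n+1) := by ring
      rw [h4, ← this]
    have key2 : (2*n+1) * ((2*n).choose n) * n.factorial * n.factorial = (2*n+1).factorial := by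
      have := Nat.choose_mul_factorial_mul_factorial (show n ≤ 2*n by omega)
      have h3 : 2*n - n = n := by omega
      rw [h3] at this
      rw [Nat.factorial_succ]
      rw [← this]; ring
    -- telescoping for RHS
    have tel : (∏ i ∈ range (n+1), (n + 1 + i).factorial) * n.factorial
        = (∏ i ∈ range (n+1), (n + i).factorial) * (2*n+1).factorial := by
      have := prod_fact_shift n (n+1)
      have h3 : n + (n+1) = 2*n+1 := by omega
      rw [h3] at this; exact this
    apply Nat.eq_of_mul_eq_mul_right (Nat.factorial_pos n)
    have rhs_eq : (∏ i ∈ range (n+1+1), (n + 1 + i).factorial) * n.factorial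
        = (2*n+2).factorial * ((2*n+1).factorial * (∏ i ∈ range (n+1), (n + i).factorial)) := by
      rw [prod_range_succ]
      have h4 : n + 1 + (n+1) = 2*n+2 := by omega
      rw [h4]
      calc (∏ i ∈ range (n+1), (n + 1 + i).factorial) * (2*n+2).factorial * n.factorial
          = ((∏ i ∈ range (n+1), (n + 1 + i).factorial) * n.factorial) * (2*n+2).factorial := by
            ring
        _ = _ := by rw [tel]; ring
    rw [rhs_eq]
    rw [show n + 1 - 1 = n from rfl, hP]
    have e1 : ∏ r ∈ range (n+1+1), r.factorial
        = (∏ r ∈ range (n+1), r.factorial) * (n+1).factorial := prod_range_succ _ _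
    have e2 : ∏ r ∈ range (n+1), r.factorial
        = (∏ r ∈ range n, r.factorial) * n.factorial := prod_range_succ _ _
    rw [e2] at ih
    rw [e1, e2]
    calc (2*(n+1)).choose (n+1) *
          ((∏ j ∈ Icc 1 (n-1), ((2*j+1) * ((2*j).choose j)^2)) * ((2*n+1) * ((2*n).choose n)^2)) *
          ((∏ r ∈ range n, r.factorial) * n.factorial * (n+1).factorial) *
          ((∏ r ∈ range n, r.factorial) * n.factorial) *
          ((∏ r ∈ range n, r.factorial) * n.factorial * (n+1).factorial) * n.factorial
        = ((2*(n+1)).choose (n+1) * (n+1).factorial * (n+1).factorial) *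
          ((2*n+1) * ((2*n).choose n) * n.factorial * n.factorial) *
          (((2*n).choose n * (∏ j ∈ Icc 1 (n-1), ((2*j+1) * ((2*j).choose j)^2)) *
            ((∏ r ∈ range n, r.factorial) * n.factorial) * (∏ r ∈ range n, r.factorial) *
            ((∏ r ∈ range n, r.factorial) * n.factorial))) := by ring
      _ = (2*n+2).factorial * ((2*n+1).factorial * ∏ i ∈ range (n+1), (n + i).factorial) := by
          rw [key1, key2, ih]; ring


-- ∏ over Ioi as ∏ over univ with ite
lemma prod_Ioi_eq_ite {n : ℕ} (i : Fin n) (f : Fin n → ℝ) :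
    ∏ j ∈ Ioi i, f j = ∏ j : Fin n, (if i < j then f j else 1) := by
  rw [← Finset.prod_filter]
  congr 1
  ext j
  simp

-- splitting of pairwise product over Fin (n+1) by removing index k
lemma pair_split {n : ℕ} (k : Fin (n+1)) (g : Fin (n+1) → Fin (n+1) → ℝ) :
    (∏ i : Fin (n+1), ∏ j ∈ Ioi i, g i j)
      = (∏ j : Fin (n+1), (if k < j then g k j else 1)) *
        ((∏ i : Fin n, (if k.succAbove i < k then g (k.succAbove i) k else 1)) *
         (∏ i : Fin n, ∏ j ∈ Ioi i, g (k.succAbove i) (k.succAbove j))) := by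
  simp_rw [prod_Ioi_eq_ite]
  rw [Fin.prod_univ_succAbove (fun i => ∏ j : Fin (n+1), (if i < j then g i j else 1)) k]
  congr 1
  rw [← Finset.prod_mul_distrib]
  refine Finset.prod_congr rfl fun i _ => ?_
  rw [Fin.prod_univ_succAbove (fun j => if k.succAbove i < j then g (k.succAbove i) j else 1) k]
  congr 1
  refine Finset.prod_congr rfl fun j _ => ?_
  exact if_congr Fin.succAbove_lt_succAbove_iff rfl rfl

-- evaluations
lemma prod_ite_gt (n k : ℕ) (hk : k ≤ n) :
    (∏ j ∈ range (n+1), (if k < j then ((j:ℝ) - (k:ℝ)) else 1)) = ((n-k).factorial : ℝ) := by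
  induction n with
  | zero =>
    interval_cases k
    simp
  | succ n ih =>
    rcases Nat.lt_or_ge k (n+1) with h | h
    · have hk' : k ≤ n := by omega
      rw [prod_range_succ, ih hk']
      have h1 : k < n + 1 := h
      rw [if_pos h1]
      have h2 : n + 1 - k = (n - k) + 1 := by omega
      rw [h2, Nat.factorial_succ]
      push_cast [Nat.succ_sub hk']
      ring_nf
      rw [Nat.cast_sub hk']
      ring
    · have hk2 : k = n + 1 := by omega
      subst hk2
      rw [Finset.prod_eq_one]
      · simp
      · intro j hj
        rw [mem_range] at hj
        rw [if_neg (by omega)]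

lemma prod_ite_lt (n k : ℕ) (hk : k ≤ n) :
    (∏ m ∈ range n, (if m < k then ((k:ℝ) - (m:ℝ)) else 1)) = (k.factorial : ℝ) := by
  have hsub : range k ⊆ range n := by
    intro x hx; rw [mem_range] at *; omega
  rw [← Finset.prod_subset hsub (fun x _ hx => by
    rw [mem_range] at hx
    rw [if_neg (by omega)])]
  have : ∀ m ∈ range k, (if m < k then ((k:ℝ) - (m:ℝ)) else 1) = (((k - m : ℕ)):ℝ) := by
    intro m hm; rw [mem_range] at hm
    rw [if_pos hm, Nat.cast_sub (le_of_lt hm)]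
  rw [Finset.prod_congr rfl this, ← Nat.cast_prod]
  norm_cast
  exact prod_sub_fact k


lemma delta_eq : ∀ m : ℕ, (∏ i : Fin m, ∏ j ∈ Ioi i, (((j:ℕ):ℝ) - ((i:ℕ):ℝ)))
    = ((∏ r ∈ range m, r.factorial : ℕ) : ℝ) := by
  intro m
  induction m with
  | zero => simp
  | succ m ih =>
    rw [Fin.prod_univ_succ, Fin.prod_Ioi_zero]
    have h1 : ∀ i : Fin m, (∏ j ∈ Ioi i.succ, (((j:ℕ):ℝ) - ((i.succ:ℕ):ℝ)))
        = ∏ j ∈ Ioi i, (((j:ℕ):ℝ) - ((i:ℕ):ℝ)) := by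
      intro i
      rw [Fin.prod_Ioi_succ]
      refine Finset.prod_congr rfl fun j _ => ?_
      push_cast [Fin.val_succ]
      ring
    simp_rw [h1]
    rw [ih]
    have h2 : (∏ j : Fin m, (((j.succ:ℕ):ℝ) - ((0 : Fin (m+1)):ℕ):ℝ))
        = ((m.factorial : ℕ) : ℝ) := by
      calc ∏ j : Fin m, (((j.succ:ℕ):ℝ) - ((0 : Fin (m+1)):ℕ):ℝ)
          = ∏ j : Fin m, ((((j:ℕ)+1 : ℕ)):ℝ) :=
            Finset.prod_congr rfl fun j _ => by push_cast [Fin.val_succ, Fin.val_zero]; ring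
        _ = ((∏ j ∈ range m, (j+1) : ℕ):ℝ) := by
            rw [Fin.prod_univ_eq_prod_range (fun x => (((x+1 : ℕ)):ℝ)) m, ← Nat.cast_prod]
        _ = ((m.factorial : ℕ) : ℝ) := by rw [prod_range_add_one_eq_factorial]
    rw [h2, prod_range_succ]
    push_cast
    ring

lemma xpart_eval (n : ℕ) (k : Fin (n+1)) :
    ((∏ r ∈ range (n+1), r.factorial : ℕ) : ℝ)
      = ((n - (k:ℕ)).factorial : ℝ) * (((k:ℕ).factorial : ℝ) *
        ∏ i : Fin n, ∏ j ∈ Ioi i, (((k.succAbove j : ℕ):ℝ) - ((k.succAbove i : ℕ):ℝ))) := by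
  rw [← delta_eq (n+1), pair_split k (fun i j => ((j:ℕ):ℝ) - ((i:ℕ):ℝ))]
  congr 1
  · -- ∏_{j} ite (k < j) ((j:ℝ)-(k:ℝ)) 1 = (n-k)!
    have : ∀ j : Fin (n+1), (if k < j then (((j:ℕ):ℝ) - ((k:ℕ):ℝ)) else 1)
        = (fun m : ℕ => if (k:ℕ) < m then ((m:ℝ) - ((k:ℕ):ℝ)) else 1) (j:ℕ) :=
      fun j => if_congr Fin.lt_iff_val_lt_val rfl rfl
    rw [Finset.prod_congr rfl (fun j _ => this j),
      Fin.prod_univ_eq_prod_range (fun m : ℕ => if (k:ℕ) < m then ((m:ℝ) - ((k:ℕ):ℝ)) else 1)]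
    exact prod_ite_gt n k (by omega)
  · congr 1
    have : ∀ i : Fin n, (if k.succAbove i < k then (((k:ℕ):ℝ) - ((k.succAbove i : ℕ):ℝ)) else 1)
        = (fun m : ℕ => if m < (k:ℕ) then (((k:ℕ):ℝ) - (m:ℝ)) else 1) (i:ℕ) := by
      intro i
      rcases Nat.lt_or_ge (i:ℕ) (k:ℕ) with h | h
      · have hcast : k.succAbove i = i.castSucc := by
          apply Fin.succAbove_of_castSucc_lt
          rwa [Fin.lt_iff_val_lt_val]
        rw [hcast]
        have h2 : i.castSucc < k := by rwa [Fin.lt_iff_val_lt_val]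
        rw [if_pos h2]
        simp only [Fin.coe_castSucc]
        rw [if_pos h]
      · have hcast : k.succAbove i = i.succ := by
          apply Fin.succAbove_of_le_castSucc
          rw [Fin.le_iff_val_le_val]
          simpa using h
        rw [hcast]
        have h2 : ¬ (i.succ < k) := by
          rw [Fin.lt_iff_val_lt_val, Fin.val_succ]
          omega
        rw [if_neg h2]
        show (1:ℝ) = if (i:ℕ) < (k:ℕ) then (((k:ℕ):ℝ) - ((i:ℕ):ℝ)) else 1
        rw [if_neg (by omega)]
    rw [Finset.prod_congr rfl (fun i _ => this i),
      Fin.prod_univ_eq_prod_range (fun m : ℕ => if m < (k:ℕ) then (((k:ℕ):ℝ) - (m:ℝ)) else 1)]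
    exact prod_ite_lt n k (by omega)

-- Gnat and const_nat
lemma const_nat (n : ℕ) :
    (2*n).choose n * (∏ j ∈ Icc 1 (n-1), ((2*j+1) * ((2*j).choose j)^2)) *
      (∏ r ∈ range (n+1), r.factorial) * (∏ r ∈ range n, r.factorial)
    = ∏ i ∈ range (n+1), ∏ j ∈ range n, (i + j + 1) := by
  apply Nat.eq_of_mul_eq_mul_right
    (show 0 < ∏ i ∈ range (n+1), i.factorial from
      Finset.prod_pos fun i _ => Nat.factorial_pos i)
  rw [claim_nat n, ← Finset.prod_mul_distrib]
  refine Finset.prod_congr rfl fun i _ => ?_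
  have := prod_shift_fact i n
  omega

lemma preal_cast (n : ℕ) :
    (∏ j ∈ Icc 1 (n-1), ((2*(j:ℝ)+1) * (((2*j).choose j : ℕ):ℝ)^2))
      = (((∏ j ∈ Icc 1 (n-1), ((2*j+1) * ((2*j).choose j)^2)) : ℕ) : ℝ) := by
  rw [Nat.cast_prod]
  refine Finset.prod_congr rfl fun j _ => by push_cast; ring

lemma det_cauchy : ∀ (n : ℕ) (x y : Fin n → ℝ), (∀ i j, x i + y j ≠ 0) →
    Matrix.det (Matrix.of fun i j => 1 / (x i + y j)) =
      (∏ i : Fin n, ∏ j ∈ Finset.Ioi i, ((x j - x i) * (y j - y i))) /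
        ∏ i : Fin n, ∏ j : Fin n, (x i + y j) := by
  intro n
  induction n with
  | zero => intro x y h; simp
  | succ n ih =>
    intro x y h
    have hx0 : ∀ j, x 0 + y j ≠ 0 := fun j => h 0 j
    set B₁ : Matrix (Fin (n+1)) (Fin (n+1)) ℝ := Matrix.of fun i j =>
      Fin.cases (1/(x 0 + y j))
        (fun i' => (x 0 - x i'.succ) * ((1/(x 0 + y j)) * (1/(x i'.succ + y j)))) i with hB₁
    have step1 : Matrix.det (Matrix.of fun i j : Fin (n+1) => 1 / (x i + y j)) = B₁.det := by
      refine det_eq_of_forall_row_eq_smul_add_const (Matrix.vecCons 0 1) 0 rfl ?_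
      intro i j
      refine Fin.cases ?_ (fun i' => ?_) i
      · simp [hB₁]
      · simp only [hB₁, Matrix.of_apply, Fin.cases_succ, Fin.cases_zero, Matrix.cons_val_succ,
          Pi.one_apply]
        have h1 := h i'.succ j
        have h2 := hx0 j
        field_simp
        ring
    set P : Matrix (Fin (n+1)) (Fin (n+1)) ℝ := Matrix.of fun i j =>
      Fin.cases 1 (fun i' => 1/(x i'.succ + y j)) i with hP
    have step2 : B₁.det = (∏ i' : Fin n, (x 0 - x i'.succ)) *
        ((∏ j : Fin (n+1), 1/(x 0 + y j)) * P.det) := by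
      have e1 : B₁ = Matrix.of fun i j =>
          (Fin.cases 1 (fun i' => x 0 - x i'.succ) i : ℝ) *
            (Matrix.of fun i j => (1/(x 0 + y j)) * P i j) i j := by
        ext i j
        refine Fin.cases ?_ (fun i' => ?_) i <;> simp [hB₁, hP]
      rw [e1, det_mul_column, det_mul_row]
      rw [Fin.prod_univ_succ]
      simp
    set Q : Matrix (Fin (n+1)) (Fin (n+1)) ℝ := Matrix.of fun j i =>
      Fin.cases (Fin.cases (1:ℝ) (fun i' => 1/(x i'.succ + y 0)) i)
        (fun j' => Fin.cases 0
          (fun i' => (y 0 - y j'.succ) * ((1/(x i'.succ + y 0)) * (1/(x i'.succ + y j'.succ)))) i) j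
      with hQ
    have step3 : P.det = Q.det := by
      rw [← Matrix.det_transpose P]
      refine det_eq_of_forall_row_eq_smul_add_const (Matrix.vecCons 0 1) 0 rfl ?_
      intro j i
      refine Fin.cases ?_ (fun j' => ?_) j
      · simp [hQ, hP]
      · refine Fin.cases ?_ (fun i' => ?_) i
        · simp [hQ, hP]
        · simp only [hQ, hP, Matrix.transpose_apply, Matrix.of_apply, Fin.cases_succ,
            Fin.cases_zero, Matrix.cons_val_succ, Pi.one_apply]
          have h1 := h i'.succ j'.succ
          have h2 := h i'.succ 0
          field_simp
          ring
    have step4 : Q.det = Matrix.det (Matrix.of fun j' i' : Fin n =>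
        (y 0 - y j'.succ) * ((1/(x i'.succ + y 0)) * (1/(x i'.succ + y j'.succ)))) := by
      rw [det_succ_column_zero]
      rw [Fin.sum_univ_succ]
      have hz : ∀ j' : Fin n, Q j'.succ 0 = 0 := by intro j'; simp [hQ]
      simp only [hz, mul_zero, zero_mul, Finset.sum_const_zero, add_zero]
      have h0 : Q 0 0 = 1 := by simp [hQ]
      rw [h0]
      simp only [Fin.val_zero, pow_zero, one_mul, mul_one, Fin.succAbove_zero]
      have e : Q.submatrix Fin.succ Fin.succ = Matrix.of fun j' i' : Fin n =>
          (y 0 - y j'.succ) * ((1/(x i'.succ + y 0)) * (1/(x i'.succ + y j'.succ))) := by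
        ext j' i'; simp [hQ]
      rw [e]
    have step5 : Matrix.det (Matrix.of fun j' i' : Fin n =>
        (y 0 - y j'.succ) * ((1/(x i'.succ + y 0)) * (1/(x i'.succ + y j'.succ)))) =
        (∏ j' : Fin n, (y 0 - y j'.succ)) * ((∏ i' : Fin n, 1/(x i'.succ + y 0)) *
          Matrix.det (Matrix.of fun i' j' : Fin n => 1/(x i'.succ + y j'.succ))) := by
      erw [det_mul_column]
      congr 1
      have e0 : (Matrix.det fun j' i' : Fin n =>
          (1/(x i'.succ + y 0)) * (1/(x i'.succ + y j'.succ))) =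
          Matrix.det (Matrix.of fun j' i' : Fin n => (1/(x i'.succ + y 0)) *
            ((Matrix.of fun j' i' : Fin n => 1/(x i'.succ + y j'.succ)) j' i')) := rfl
      rw [e0, det_mul_row]
      congr 1
      rw [← Matrix.det_transpose]
      rfl
    have step6 : Matrix.det (Matrix.of fun i' j' : Fin n => 1/(x i'.succ + y j'.succ)) =
        (∏ i : Fin n, ∏ j ∈ Finset.Ioi i, ((x j.succ - x i.succ) * (y j.succ - y i.succ))) /
          ∏ i : Fin n, ∏ j : Fin n, (x i.succ + y j.succ) :=
      ih (fun i => x i.succ) (fun j => y j.succ) (fun i j => h i.succ j.succ)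
    rw [step1, step2, step3, step4, step5, step6]
    -- final bookkeeping
    have hP2 : (∏ j : Fin (n+1), (x 0 + y j)) ≠ 0 := Finset.prod_ne_zero_iff.mpr fun j _ => hx0 j
    have hP4 : (∏ i' : Fin n, (x i'.succ + y 0)) ≠ 0 :=
      Finset.prod_ne_zero_iff.mpr fun i _ => h i.succ 0
    have hD : (∏ i : Fin n, ∏ j : Fin n, (x i.succ + y j.succ)) ≠ 0 :=
      Finset.prod_ne_zero_iff.mpr fun i _ =>
        Finset.prod_ne_zero_iff.mpr fun j _ => h i.succ j.succ
    have eNum : (∏ i : Fin (n+1), ∏ j ∈ Finset.Ioi i, ((x j - x i) * (y j - y i))) =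
        ((∏ i' : Fin n, (x 0 - x i'.succ)) * (∏ j' : Fin n, (y 0 - y j'.succ))) *
          (∏ i : Fin n, ∏ j ∈ Finset.Ioi i, ((x j.succ - x i.succ) * (y j.succ - y i.succ))) := by
      rw [Fin.prod_univ_succ, Fin.prod_Ioi_zero]
      have : ∀ i : Fin n, (∏ j ∈ Finset.Ioi i.succ, ((x j - x i.succ) * (y j - y i.succ))) =
          ∏ j ∈ Finset.Ioi i, ((x j.succ - x i.succ) * (y j.succ - y i.succ)) := fun i =>
        Fin.prod_Ioi_succ _ i
      simp_rw [this]
      congr 1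
      rw [← Finset.prod_mul_distrib]
      refine Finset.prod_congr rfl fun i _ => by ring
    have eDen : (∏ i : Fin (n+1), ∏ j : Fin (n+1), (x i + y j)) =
        (∏ j : Fin (n+1), (x 0 + y j)) * ((∏ i' : Fin n, (x i'.succ + y 0)) *
          (∏ i : Fin n, ∏ j : Fin n, (x i.succ + y j.succ))) := by
      rw [Fin.prod_univ_succ]
      congr 1
      rw [← Finset.prod_mul_distrib]
      refine Finset.prod_congr rfl fun i _ => ?_
      rw [Fin.prod_univ_succ]
    rw [eNum, eDen]
    have e1 : (∏ j : Fin (n+1), 1/(x 0 + y j)) = (∏ j : Fin (n+1), (x 0 + y j))⁻¹ := by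
      simp [one_div]
    have e2 : (∏ i' : Fin n, 1/(x i'.succ + y 0)) = (∏ i' : Fin n, (x i'.succ + y 0))⁻¹ := by
      simp [one_div]
    rw [e1, e2]
    field_simp

lemma minor_value (t : ℝ) (n : ℕ) (k : Fin (n+1)) :
    Matrix.det (Matrix.of fun i j : Fin n =>
        t ^ (((k.succAbove i : Fin (n+1)) : ℕ) + ((j:ℕ)+1)) /
          (((((k.succAbove i : Fin (n+1)) : ℕ) + ((j:ℕ)+1)) : ℕ) : ℝ))
      = t^(n^2) * t^(n - (k:ℕ)) *
        (((n.choose (k:ℕ)) * ((n+(k:ℕ)).choose (k:ℕ)) : ℕ) : ℝ) /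
        ((((2*n).choose n : ℕ):ℝ) *
          ∏ j ∈ Icc 1 (n-1), ((2*(j:ℝ)+1) * (((2*j).choose j : ℕ):ℝ)^2)) := by
  have hk : (k:ℕ) ≤ n := by omega
  have hxy : ∀ i j : Fin n,
      (((k.succAbove i : ℕ):ℝ)) + ((((j:ℕ):ℝ)) + 1) ≠ 0 := by
    intro i j
    positivity
  -- step 1 : factor the determinant
  have e1 : (Matrix.of fun i j : Fin n =>
        t ^ (((k.succAbove i : Fin (n+1)) : ℕ) + ((j:ℕ)+1)) /
          (((((k.succAbove i : Fin (n+1)) : ℕ) + ((j:ℕ)+1)) : ℕ) : ℝ))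
      = Matrix.of fun i j : Fin n =>
          t ^ ((k.succAbove i : ℕ)) * ((Matrix.of fun i j : Fin n =>
            t ^ ((j:ℕ)+1) * ((Matrix.of fun i j : Fin n =>
              1 / ((((k.succAbove i : ℕ):ℝ)) + ((((j:ℕ):ℝ)) + 1))) i j)) i j) := by
    ext i j
    simp only [Matrix.of_apply]
    rw [pow_add]
    have hc : ((((k.succAbove i : ℕ) + ((j:ℕ)+1)) : ℕ) : ℝ)
        = (((k.succAbove i : ℕ):ℝ)) + ((((j:ℕ):ℝ)) + 1) := by push_cast; ring
    rw [hc]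
    field_simp
  rw [e1, Matrix.det_mul_column, Matrix.det_mul_row,
    det_cauchy n (fun i => ((k.succAbove i : ℕ):ℝ)) (fun j => (((j:ℕ):ℝ)) + 1) hxy]
  -- step 2 : power bookkeeping
  have hpow : (∏ i : Fin n, t ^ ((k.succAbove i : ℕ))) * (∏ j : Fin n, t ^ ((j:ℕ)+1))
      = t^(n^2) * t^(n - (k:ℕ)) := by
    rw [Finset.prod_pow_eq_pow_sum, Finset.prod_pow_eq_pow_sum, ← pow_add, ← pow_add]
    congr 1
    have h1 : (∑ i : Fin (n+1), (i:ℕ)) = (k:ℕ) + ∑ i : Fin n, ((k.succAbove i : ℕ)) :=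
      Fin.sum_univ_succAbove (fun i : Fin (n+1) => (i:ℕ)) k
    have h2 : (∑ i : Fin (n+1), (i:ℕ)) = ∑ m ∈ range (n+1), m :=
      Fin.sum_univ_eq_sum_range (fun m => m) (n+1)
    have h3 : (∑ m ∈ range (n+1), m) * 2 = n*n + n := by
      have := sum_range_id_mul_two (n+1)
      simp only [Nat.add_sub_cancel] at this
      rw [this]; ring
    have h4 : (∑ j : Fin n, ((j:ℕ)+1)) = ∑ m ∈ range n, (m+1) :=
      Fin.sum_univ_eq_sum_range (fun m => m+1) n
    have h5 : (∑ m ∈ range n, (m+1)) = (∑ m ∈ range n, m) + n := by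
      rw [Finset.sum_add_distrib]; simp
    have h6 : (∑ m ∈ range n, m) * 2 + n + n = n*n + n := by
      have := sum_range_id_mul_two n
      rw [this]
      cases n with
      | zero => simp
      | succ m => simp only [Nat.succ_sub_one]; ring
    have h9 : n^2 = n*n := sq n
    rw [h9]
    generalize n*n = a at h3 h6 ⊢
    omega
  rw [← mul_assoc, hpow]
  -- step 3 : split the numerator
  have hnum : (∏ i : Fin n, ∏ j ∈ Ioi i,
        ((((k.succAbove j : ℕ):ℝ) - ((k.succAbove i : ℕ):ℝ)) *
          (((((j:ℕ):ℝ)) + 1) - ((((i:ℕ):ℝ)) + 1))))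
      = (∏ i : Fin n, ∏ j ∈ Ioi i, (((k.succAbove j : ℕ):ℝ) - ((k.succAbove i : ℕ):ℝ))) *
        (∏ i : Fin n, ∏ j ∈ Ioi i, (((j:ℕ):ℝ) - ((i:ℕ):ℝ))) := by
    rw [← Finset.prod_mul_distrib]
    refine Finset.prod_congr rfl fun i _ => ?_
    rw [← Finset.prod_mul_distrib]
    refine Finset.prod_congr rfl fun j _ => by ring
  rw [hnum]
  have hfrac : ((∏ i : Fin n, ∏ j ∈ Ioi i, (((k.succAbove j : ℕ):ℝ) - ((k.succAbove i : ℕ):ℝ))) *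
        (∏ i : Fin n, ∏ j ∈ Ioi i, (((j:ℕ):ℝ) - ((i:ℕ):ℝ)))) /
        (∏ i : Fin n, ∏ j : Fin n, (((k.succAbove i : ℕ):ℝ) + ((((j:ℕ):ℝ)) + 1)))
      = (((n.choose (k:ℕ)) * ((n+(k:ℕ)).choose (k:ℕ)) : ℕ) : ℝ) /
        ((((2*n).choose n : ℕ):ℝ) *
          ∏ j ∈ Icc 1 (n-1), ((2*(j:ℝ)+1) * (((2*j).choose j : ℕ):ℝ)^2)) := by
    rw [preal_cast n]
    have hX := xpart_eval n k
    have hY := delta_eq n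
    have hDen : (∏ i : Fin (n+1), ∏ j : Fin n, (((i:ℕ):ℝ) + ((((j:ℕ):ℝ)) + 1)))
        = (∏ j : Fin n, (((k:ℕ):ℝ) + ((((j:ℕ):ℝ)) + 1))) *
          (∏ i : Fin n, ∏ j : Fin n, (((k.succAbove i : ℕ):ℝ) + ((((j:ℕ):ℝ)) + 1))) :=
      Fin.prod_univ_succAbove
        (fun i : Fin (n+1) => ∏ j : Fin n, (((i:ℕ):ℝ) + ((((j:ℕ):ℝ)) + 1))) k
    have inner : ∀ m : ℕ, (∏ j : Fin n, ((m:ℝ) + ((((j:ℕ):ℝ)) + 1)))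
        = ((∏ j ∈ range n, (m + j + 1) : ℕ) : ℝ) := by
      intro m
      rw [Fin.prod_univ_eq_prod_range (fun x => ((m:ℝ) + (((x:ℕ):ℝ) + 1))) n, Nat.cast_prod]
      exact Finset.prod_congr rfl fun j _ => by push_cast; ring
    have hPF : (∏ i : Fin (n+1), ∏ j : Fin n, (((i:ℕ):ℝ) + ((((j:ℕ):ℝ)) + 1)))
        = ((∏ i ∈ range (n+1), ∏ j ∈ range n, (i + j + 1) : ℕ) : ℝ) := by
      have step1 : (∏ i : Fin (n+1), ∏ j : Fin n, (((i:ℕ):ℝ) + ((((j:ℕ):ℝ)) + 1)))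
          = ∏ i : Fin (n+1), ((∏ j ∈ range n, ((i:ℕ) + j + 1) : ℕ) : ℝ) :=
        Finset.prod_congr rfl fun i _ => inner (i:ℕ)
      rw [Nat.cast_prod, step1]
      exact Fin.prod_univ_eq_prod_range
        (fun m : ℕ => ((∏ j ∈ range n, (m + j + 1) : ℕ) : ℝ)) (n+1)
    have hIP : (∏ j : Fin n, (((k:ℕ):ℝ) + ((((j:ℕ):ℝ)) + 1))) * (((k:ℕ).factorial : ℕ):ℝ)
        = (((n + (k:ℕ)).factorial : ℕ):ℝ) := by
      rw [inner (k:ℕ), ← Nat.cast_mul, prod_shift_fact]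
    -- abbreviations
    set Xk := (∏ i : Fin n, ∏ j ∈ Ioi i,
      (((k.succAbove j : ℕ):ℝ) - ((k.succAbove i : ℕ):ℝ))) with hXk'
    set Den := (∏ i : Fin n, ∏ j : Fin n,
      (((k.succAbove i : ℕ):ℝ) + ((((j:ℕ):ℝ)) + 1))) with hDen'
    set IP := (∏ j : Fin n, (((k:ℕ):ℝ) + ((((j:ℕ):ℝ)) + 1))) with hIP'
    have hfac1 : (((n - (k:ℕ)).factorial : ℕ):ℝ) ≠ 0 := by positivity
    have hfac2 : (((k:ℕ).factorial : ℕ):ℝ) ≠ 0 := by positivity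
    have hfacnk : (((n + (k:ℕ)).factorial : ℕ):ℝ) ≠ 0 := by positivity
    have hGpos : (0:ℝ) < ((∏ i ∈ range (n+1), ∏ j ∈ range n, (i + j + 1) : ℕ) : ℝ) := by
      have : 0 < (∏ i ∈ range (n+1), ∏ j ∈ range n, (i + j + 1) : ℕ) :=
        Finset.prod_pos fun i _ => Finset.prod_pos fun j _ => by omega
      exact_mod_cast this
    have hC2 : ((((2*n).choose n : ℕ)):ℝ) ≠ 0 := by
      have : 0 < (2*n).choose n := Nat.choose_pos (by omega)
      positivity
    have hPnat : (((∏ j ∈ Icc 1 (n-1), ((2*j+1) * ((2*j).choose j)^2)) : ℕ) : ℝ) ≠ 0 := by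
      have : 0 < (∏ j ∈ Icc 1 (n-1), ((2*j+1) * ((2*j).choose j)^2)) :=
        Finset.prod_pos fun j hj => by
          have : 0 < (2*j).choose j := Nat.choose_pos (by omega)
          positivity
      positivity
    have hIPpos : (0:ℝ) < IP := by
      rw [hIP']
      exact Finset.prod_pos fun j _ => by positivity
    have hDenpos : (0:ℝ) < Den := by
      rw [hDen']
      exact Finset.prod_pos fun i _ => Finset.prod_pos fun j _ => by positivity
    -- solve for Xk and Den
    have hXkval : Xk = ((∏ r ∈ range (n+1), r.factorial : ℕ) : ℝ) /
        ((((n - (k:ℕ)).factorial : ℕ):ℝ) * (((k:ℕ).factorial : ℕ):ℝ)) := by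
      rw [eq_div_iff (by positivity), hX]; ring
    have hDenval : Den = ((∏ i ∈ range (n+1), ∏ j ∈ range n, (i + j + 1) : ℕ) : ℝ) *
        (((k:ℕ).factorial : ℕ):ℝ) / (((n + (k:ℕ)).factorial : ℕ):ℝ) := by
      rw [eq_div_iff hfacnk, ← hIP]
      have : IP * Den = ((∏ i ∈ range (n+1), ∏ j ∈ range n, (i + j + 1) : ℕ) : ℝ) := by
        rw [← hPF, hDen]
      calc Den * (IP * (((k:ℕ).factorial : ℕ):ℝ))
          = (IP * Den) * (((k:ℕ).factorial : ℕ):ℝ) := by ring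
        _ = _ := by rw [this]
    have h1' : ((((2*n).choose n : ℕ)):ℝ) *
        (((∏ j ∈ Icc 1 (n-1), ((2*j+1) * ((2*j).choose j)^2) : ℕ)):ℝ) *
        (((∏ r ∈ range (n+1), r.factorial : ℕ)):ℝ) * (((∏ r ∈ range n, r.factorial : ℕ)):ℝ)
        = ((∏ i ∈ range (n+1), ∏ j ∈ range n, (i + j + 1) : ℕ):ℝ) := by
      exact_mod_cast congrArg (Nat.cast : ℕ → ℝ) (const_nat n)
    have h2' : (((n.choose (k:ℕ)) * ((n+(k:ℕ)).choose (k:ℕ)) : ℕ):ℝ) *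
        (((((k:ℕ).factorial : ℕ)):ℝ) * ((((k:ℕ).factorial : ℕ)):ℝ) *
          ((((n-(k:ℕ)).factorial : ℕ)):ℝ))
        = ((((n+(k:ℕ)).factorial : ℕ)):ℝ) := by
      exact_mod_cast congrArg (Nat.cast : ℕ → ℝ) (choose_prod_eq n (k:ℕ) hk)
    rw [hXkval, hY, hDenval]
    clear hX hDen hPF hIP hXkval hDenval hnum hY inner hIPpos hDenpos hxy e1 hpow hGpos
    clear_value Xk Den IP
    clear hXk' hDen' hIP' Xk Den IP
    have hAne : ((∏ r ∈ range (n+1), r.factorial : ℕ) : ℝ) ≠ 0 := by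
      have : 0 < (∏ r ∈ range (n+1), r.factorial) :=
        Finset.prod_pos fun r _ => Nat.factorial_pos r
      positivity
    have hDne : ((∏ r ∈ range n, r.factorial : ℕ) : ℝ) ≠ 0 := by
      have : 0 < (∏ r ∈ range n, r.factorial) :=
        Finset.prod_pos fun r _ => Nat.factorial_pos r
      positivity
    have hGne : ((∏ i ∈ range (n+1), ∏ j ∈ range n, (i + j + 1) : ℕ):ℝ) ≠ 0 := by
      have : 0 < (∏ i ∈ range (n+1), ∏ j ∈ range n, (i + j + 1)) :=
        Finset.prod_pos fun i _ => Finset.prod_pos fun j _ => by omega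
      positivity
    generalize hA : ((∏ r ∈ range (n+1), r.factorial : ℕ) : ℝ) = A at *
    generalize hD : ((∏ r ∈ range n, r.factorial : ℕ) : ℝ) = D at *
    generalize hB : ((((n-(k:ℕ)).factorial : ℕ)):ℝ) = B at *
    generalize hC : ((((k:ℕ).factorial : ℕ)):ℝ) = C at *
    generalize hE : ((((n+(k:ℕ)).factorial : ℕ)):ℝ) = E at *
    generalize hG : ((∏ i ∈ range (n+1), ∏ j ∈ range n, (i + j + 1) : ℕ):ℝ) = G at *
    generalize hCC : (((n.choose (k:ℕ)) * ((n+(k:ℕ)).choose (k:ℕ)) : ℕ):ℝ) = CC at *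
    generalize hC2 : ((((2*n).choose n : ℕ)):ℝ) = C2 at *
    generalize hP : (((∏ j ∈ Icc 1 (n-1), ((2*j+1) * ((2*j).choose j)^2) : ℕ)):ℝ) = P at *
    rw [← h1', ← h2']
    field_simp
  rw [hfrac]
  ring

lemma harmonicPoly_succ (m : ℕ) (t : ℝ) :
    harmonicPoly (m+1) t = harmonicPoly m t + t^(m+1) / (((m+1 : ℕ)):ℝ) := by
  unfold harmonicPoly
  rw [Finset.sum_Icc_succ_top (by omega)]


end Aux

open Finset Matrix

/-- `det((H_{i+j}(t))_{i,j=0}^n)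
  = (−1)^n t^{n²} r(n,t) / (C(2n,n)·∏_{j=1}^{n−1} ((2j+1)C(2j,j)²))`. -/
theorem det_hankel_harmonicPoly (t : ℝ) (n : ℕ) :
    Matrix.det (Matrix.of fun i j : Fin (n + 1) => harmonicPoly ((i : ℕ) + (j : ℕ)) t) =
      (-1 : ℝ) ^ n * t ^ (n ^ 2) * rPoly n t /
        ((Nat.choose (2 * n) n : ℝ) *
          ∏ j ∈ Finset.Icc 1 (n - 1), ((2 * (j : ℝ) + 1) * (Nat.choose (2 * j) j : ℝ) ^ 2)) := by

  set B : Matrix (Fin (n+1)) (Fin (n+1)) ℝ := Matrix.of fun i l =>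
    if (l:ℕ) = 0 then harmonicPoly (i:ℕ) t
    else t ^ ((i:ℕ) + (l:ℕ)) / ((((i:ℕ) + (l:ℕ) : ℕ)) : ℝ) with hB
  set U : Matrix (Fin (n+1)) (Fin (n+1)) ℝ := Matrix.of fun l j =>
    if l ≤ j then (1:ℝ) else 0 with hU
  have hUdet : U.det = 1 := by
    rw [Matrix.det_of_upperTriangular (by
      intro i j hij
      simp only [hU, Matrix.of_apply]
      rw [if_neg (by exact fun h => absurd (lt_of_le_of_lt h hij) (lt_irrefl _))])]
    simp [hU]
  have key : ∀ (i : Fin (n+1)) (j : Fin (n+1)),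
      (∑ l : Fin (n+1), B i l * U l j) = harmonicPoly ((i:ℕ) + (j:ℕ)) t := by
    intro i j
    induction j using Fin.induction with
    | zero =>
      rw [Finset.sum_eq_single (0 : Fin (n+1))]
      · simp [hB, hU]
      · intro l _ hl
        have : ¬ (l ≤ 0) := by
          rw [Fin.le_zero_iff]; exact hl
        simp [hU, this]
      · simp
    | succ j ih =>
      have hsplit : ∀ l : Fin (n+1), U l j.succ
          = U l j.castSucc + (if l = j.succ then 1 else 0) := by
        intro l
        simp only [hU, Matrix.of_apply]
        by_cases h1 : l = j.succ
        · subst h1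
          rw [if_pos le_rfl, if_pos rfl, if_neg (by
            exact fun h => absurd (lt_of_le_of_lt h (Fin.castSucc_lt_succ (i := j))) (lt_irrefl _))]
          ring
        · rw [if_neg h1]
          by_cases h2 : l ≤ j.castSucc
          · rw [if_pos h2, if_pos (le_trans h2 (Fin.castSucc_lt_succ (i := j)).le)]; ring
          · rw [if_neg h2, if_neg (by
              intro h
              exact h2 (Fin.le_castSucc_iff.mpr (lt_of_le_of_ne h h1)))]
            ring
      simp only [hsplit, mul_add]
      rw [Finset.sum_add_distrib, ih]
      have h2 : (∑ l : Fin (n+1), B i l * (if l = j.succ then (1:ℝ) else 0))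
          = B i j.succ := by
        rw [Finset.sum_eq_single j.succ]
        · simp
        · intro l _ hl; simp [hl]
        · simp
      rw [h2]
      have h3 : B i j.succ = t ^ ((i:ℕ) + ((j:ℕ)+1)) / ((((i:ℕ) + ((j:ℕ)+1) : ℕ)) : ℝ) := by
        simp only [hB, Matrix.of_apply, Fin.val_succ]
        rw [if_neg (by omega)]
      rw [h3]
      have h4 : ((i:ℕ) + (j.succ : ℕ)) = ((i:ℕ) + (j:ℕ)) + 1 := by
        simp [Fin.val_succ]; omega
      have h5 : ((i:ℕ) + (j.castSucc : ℕ)) = (i:ℕ) + (j:ℕ) := by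
        simp
      have h6 : (i:ℕ) + ((j:ℕ)+1) = ((i:ℕ) + (j:ℕ)) + 1 := by omega
      rw [h4, h5, h6, harmonicPoly_succ]
  have hAU : (Matrix.of fun i j : Fin (n + 1) => harmonicPoly ((i : ℕ) + (j : ℕ)) t)
      = B * U := by
    ext i j
    rw [Matrix.mul_apply, key i j]
    rfl
  rw [hAU, Matrix.det_mul, hUdet, mul_one]
  rw [Matrix.det_succ_column_zero]
  have hterm : ∀ k : Fin (n+1),
      (B.submatrix k.succAbove Fin.succ).det
        = t^(n^2) * t^(n - (k:ℕ)) *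
          (((n.choose (k:ℕ)) * ((n+(k:ℕ)).choose (k:ℕ)) : ℕ) : ℝ) /
          ((((2*n).choose n : ℕ):ℝ) *
            ∏ j ∈ Icc 1 (n-1), ((2*(j:ℝ)+1) * (((2*j).choose j : ℕ):ℝ)^2)) := by
    intro k
    rw [← minor_value t n k]
    congr 1
  have hB0 : ∀ k : Fin (n+1), B k 0 = harmonicPoly (k:ℕ) t := by
    intro k; simp [hB]
  simp only [hterm, hB0]
  -- now a pure sum identity
  rw [show ((Nat.choose (2 * n) n : ℝ)) = (((2*n).choose n : ℕ):ℝ) from rfl]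
  set P := ∏ j ∈ Icc 1 (n-1), ((2*(j:ℝ)+1) * (((2*j).choose j : ℕ):ℝ)^2) with hP
  rw [rPoly]
  rw [Fin.sum_univ_eq_sum_range (fun m => (-1:ℝ)^m * harmonicPoly m t *
    (t^(n^2) * t^(n - m) * (((n.choose m) * ((n+m).choose m) : ℕ) : ℝ) /
      ((((2*n).choose n : ℕ):ℝ) * P))) (n+1)]
  rw [Finset.mul_sum, Finset.sum_div]
  refine Finset.sum_congr rfl fun j hj => ?_
  have hjn : j ≤ n := by
    rw [mem_range] at hj; omega
  have hsign : ((-1):ℝ)^n * (-1)^(n-j) = (-1)^j := by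
    rw [← pow_add]
    have h8 : n + (n-j) = 2*(n-j) + j := by omega
    rw [h8, pow_add, pow_mul, neg_one_sq, one_pow, one_mul]
  rw [← mul_div_assoc]
  refine congrArg (fun z => z / ((((2*n).choose n : ℕ):ℝ) * P)) ?_
  push_cast
  linear_combination (-(harmonicPoly j t * t^(n^2) * t^(n-j) * ((n.choose j : ℕ):ℝ) *
    (((n+j).choose j : ℕ):ℝ))) * hsign
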